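/- Let (a,b,c,d) ∈ P, let γ₁, γ₂ ∈ ℂ* with μ(γ₁) ≠ μ(γ₂), and let φ ∈ V_{μ(γ₁)} and ψ ∈ V_{μ(γ₂)}. Then for all integers k and n, the limit lim_{l→∞, m→∞} ⟨φ, conj(ψ)⟩_{k,l;m,n} exists and equals [D(φ, ψ)(z₊q^{n−1}) − D(φ, ψ)(z₋q^{k−1})] / (μ(γ₁) − μ(γ₂)), where conj(ψ) denotes the pointwise complex conjugate of ψ. -/

import Mathlib

open Complex Filter

noncomputable section

namespace VVBQJ

/-- The infinite q-shifted factorial `(x;q)_∞`. -/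
def poch (q x : ℂ) : ℂ := ∏' j : ℕ, (1 - x * q ^ j)

/-- The q-shifted factorial `(x;q)_n`, `n ∈ ℕ`. -/
def pochN (q x : ℂ) (n : ℕ) : ℂ := ∏ j ∈ Finset.range n, (1 - x * q ^ j)

/-- The normalized Jacobi theta function `θ(x) = (x;q)_∞ (q/x;q)_∞`. -/
def theta (q x : ℂ) : ℂ := poch q x * poch q (q / x)

/-- The condition on the pairs `(a,b)` and `(c,d)` in the parameter set `P`. -/
def pairCond (q zm zp : ℝ) (α β : ℂ) : Prop :=
  α = (starRingEnd ℂ) β ∨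
    (∃ (A B : ℝ) (k₀ : ℤ), α = (A : ℂ) ∧ β = (B : ℂ) ∧
      zp * q ^ k₀ < 1 / B ∧ 1 / B < 1 / A ∧ 1 / A < zp * q ^ (k₀ - 1)) ∨
    (∃ (A B : ℝ) (k₀ : ℤ), α = (A : ℂ) ∧ β = (B : ℂ) ∧
      zm * q ^ (k₀ - 1) < 1 / A ∧ 1 / A < 1 / B ∧ 1 / B < zm * q ^ k₀)

/-- The parameter domain `P`. -/
def memP (q zm zp : ℝ) (a b c d : ℂ) : Prop :=
  a ≠ 0 ∧ b ≠ 0 ∧ c ≠ 0 ∧ d ≠ 0 ∧ a ≠ b ∧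
    (∀ x ∈ ({a, b, c, d} : Set ℂ), ∀ k : ℤ,
      x ≠ ((zp : ℂ))⁻¹ * (q : ℂ) ^ k ∧ x ≠ ((zm : ℂ))⁻¹ * (q : ℂ) ^ k) ∧
    pairCond q zm zp a b ∧ pairCond q zm zp c d

/-- The generic parameter domain `P_gen`. -/
def memPgen (q zm zp : ℝ) (a b c d : ℂ) : Prop :=
  memP q zm zp a b c d ∧ c ≠ d ∧
    ∀ k : ℤ, c / a ≠ (q : ℂ) ^ k ∧ c / b ≠ (q : ℂ) ^ k ∧ d / a ≠ (q : ℂ) ^ k ∧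
      d / b ≠ (q : ℂ) ^ k ∧ c * d / (a * b) ≠ (q : ℂ) ^ k

/-- `s = √(cdq/(ab))`, with the principal branch of the square root. -/
def sP (q : ℝ) (a b c d : ℂ) : ℂ := (c * d * (q : ℂ) / (a * b)) ^ ((1 : ℂ) / 2)

def Acoef (q : ℝ) (a b c d : ℂ) (x : ℝ) : ℂ :=
  (sP q a b c d)⁻¹ * (1 - (q : ℂ) / (a * (x : ℂ))) * (1 - (q : ℂ) / (b * (x : ℂ)))

def Bcoef (q : ℝ) (a b c d : ℂ) (x : ℝ) : ℂ :=
  sP q a b c d * (1 - 1 / (c * (x : ℂ))) * (1 - 1 / (d * (x : ℂ)))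

def Ccoef (q : ℝ) (a b c d : ℂ) (x : ℝ) : ℂ :=
  sP q a b c d + (sP q a b c d)⁻¹ - Acoef q a b c d x - Bcoef q a b c d x

/-- The second order q-difference operator `L`. -/
def Lop (q : ℝ) (a b c d : ℂ) (f : ℝ → ℂ) (x : ℝ) : ℂ :=
  Acoef q a b c d x * f (x / q) + Bcoef q a b c d x * f (q * x) + Ccoef q a b c d x * f x

/-- The weight function `w`. -/
def w (q : ℝ) (a b c d : ℂ) (x : ℝ) : ℂ :=
  poch q (a * (x : ℂ)) * poch q (b * (x : ℂ)) / (poch q (c * (x : ℂ)) * poch q (d * (x : ℂ)))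

/-- The function `u(x) = (1-q)² B(x) x² w(x)`. -/
def u (q : ℝ) (a b c d : ℂ) (x : ℝ) : ℂ :=
  (1 - (q : ℂ)) ^ 2 * Bcoef q a b c d x * (x : ℂ) ^ 2 * w q a b c d x

/-- The Casorati determinant `D(f,g)`. -/
def casD (q : ℝ) (a b c d : ℂ) (f g : ℝ → ℂ) (x : ℝ) : ℂ :=
  (f x * g (q * x) - f (q * x) * g x) * u q a b c d x / ((1 - (q : ℂ)) * (x : ℂ))

/-- The truncated inner product `⟨f,g⟩_{k,l;m,n}`. -/
def trunc (q zm zp : ℝ) (a b c d : ℂ) (f g : ℝ → ℂ) (k l m n : ℤ) : ℂ :=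
  (1 - (q : ℂ)) *
    ((∑ j ∈ Finset.Icc n m, f (zp * q ^ j) * (starRingEnd ℂ) (g (zp * q ^ j)) *
        w q a b c d (zp * q ^ j) * ((zp * q ^ j : ℝ) : ℂ)) -
      ∑ j ∈ Finset.Icc k l, f (zm * q ^ j) * (starRingEnd ℂ) (g (zm * q ^ j)) *
        w q a b c d (zm * q ^ j) * ((zm * q ^ j : ℝ) : ℂ))

/-- The constant `K_z`. -/
def Kz (q : ℝ) (a b c d : ℂ) (z : ℝ) : ℂ :=
  (z : ℂ) * (1 - (q : ℂ)) * (theta q (a * z) * theta q (b * z)) /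
    (theta q (c * z) * theta q (d * z))

/-- Membership in the Hilbert space `ℒ²(ℝ_q, w(x) d_q x)`. -/
def memL2 (q zm zp : ℝ) (a b c d : ℂ) (f : ℝ → ℂ) : Prop :=
  Summable (fun k : ℤ => ‖f (zp * q ^ k)‖ ^ 2 * ‖w q a b c d (zp * q ^ k)‖ * |zp * q ^ k|) ∧
    Summable (fun k : ℤ => ‖f (zm * q ^ k)‖ ^ 2 * ‖w q a b c d (zm * q ^ k)‖ * |zm * q ^ k|)

/-- The inner product on `ℒ²`. -/
def innerL2 (q zm zp : ℝ) (a b c d : ℂ) (f g : ℝ → ℂ) : ℂ :=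
  (1 - (q : ℂ)) *
    ((∑' k : ℤ, f (zp * q ^ k) * (starRingEnd ℂ) (g (zp * q ^ k)) *
        w q a b c d (zp * q ^ k) * ((zp * q ^ k : ℝ) : ℂ)) -
      ∑' k : ℤ, f (zm * q ^ k) * (starRingEnd ℂ) (g (zm * q ^ k)) *
        w q a b c d (zm * q ^ k) * ((zm * q ^ k : ℝ) : ℂ))

/-- The squared `ℒ²`-norm. -/
def normSqL2 (q zm zp : ℝ) (a b c d : ℂ) (f : ℝ → ℂ) : ℝ :=
  (1 - q) *
    ((∑' k : ℤ, ‖f (zp * q ^ k)‖ ^ 2 * ‖w q a b c d (zp * q ^ k)‖ * (zp * q ^ k)) +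
      ∑' k : ℤ, ‖f (zm * q ^ k)‖ ^ 2 * ‖w q a b c d (zm * q ^ k)‖ * (-(zm * q ^ k)))

/-- The q-difference operator `D_q`. -/
def Dq (q : ℝ) (f : ℝ → ℂ) (x : ℝ) : ℂ := (f x - f (q * x)) / ((1 - (q : ℂ)) * (x : ℂ))

/-- The q-line `ℝ_q`. -/
def Rq (q zm zp : ℝ) : Set ℝ := {x | ∃ k : ℤ, x = zm * q ^ k ∨ x = zp * q ^ k}

/-- Membership in the domain `𝒟`. -/
def memD (q zm zp : ℝ) (a b c d : ℂ) (f : ℝ → ℂ) : Prop :=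
  memL2 q zm zp a b c d f ∧ memL2 q zm zp a b c d (Lop q a b c d f) ∧
    (∃ v : ℂ, Tendsto (fun k : ℕ => f (zm * q ^ k)) atTop (nhds v) ∧
        Tendsto (fun k : ℕ => f (zp * q ^ k)) atTop (nhds v)) ∧
    (∃ v : ℂ, Tendsto (fun k : ℕ => Dq q f (zm * q ^ k)) atTop (nhds v) ∧
        Tendsto (fun k : ℕ => Dq q f (zp * q ^ k)) atTop (nhds v))

/-- Membership in the eigenspace `V_μ` (functions on `ℝ_q`). -/
def memV (q zm zp : ℝ) (a b c d : ℂ) (μ : ℂ) (f : ℝ → ℂ) : Prop :=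
  (∀ x ∈ Rq q zm zp, Lop q a b c d f x = μ * f x) ∧
    (∃ v : ℂ, Tendsto (fun k : ℕ => f (zm * q ^ k)) atTop (nhds v) ∧
        Tendsto (fun k : ℕ => f (zp * q ^ k)) atTop (nhds v)) ∧
    (∃ v : ℂ, Tendsto (fun k : ℕ => Dq q f (zm * q ^ k)) atTop (nhds v) ∧
        Tendsto (fun k : ℕ => Dq q f (zp * q ^ k)) atTop (nhds v))

/-- The set of regular spectral values `S_reg = ℂ* \ {± q^{k/2}}`. -/
def Sreg (q : ℝ) (γ : ℂ) : Prop :=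
  γ ≠ 0 ∧ ∀ k : ℤ, γ ≠ ((q ^ ((k : ℝ) / 2) : ℝ) : ℂ) ∧ γ ≠ -((q ^ ((k : ℝ) / 2) : ℝ) : ℂ)

/-- The big q-Jacobi function `φ_γ(x)`. -/
def phi (q : ℝ) (a b c d : ℂ) (γ x : ℂ) : ℂ :=
  ∑' n : ℕ,
    pochN q (q / (a * x)) n * pochN q (sP q a b c d * γ) n * pochN q (sP q a b c d / γ) n /
      (pochN q q n * pochN q (c * q / a) n * pochN q (d * q / a) n) * (b * x) ^ n

/-- The asymptotic solution `Φ_γ(z q^{-k})`, in index form. -/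
def PhiIdx (q : ℝ) (a b c d : ℂ) (γ : ℂ) (z : ℝ) (k : ℤ) : ℂ :=
  let s : ℂ := sP q a b c d
  let x : ℂ := (z : ℂ) * (q : ℂ) ^ (-k)
  (s * γ) ^ k *
    (poch q ((q : ℂ) / (b * x)) * poch q ((q : ℂ) ^ 2 * γ / (a * s * x)) /
      (poch q ((q : ℂ) / (c * x)) * poch q ((q : ℂ) / (d * x)))) *
    ∑' n : ℕ,
      pochN q ((q : ℂ) * γ / s) n * pochN q (c * q * γ / (s * a)) n *
          pochN q (d * q * γ / (s * a)) n /
        (pochN q q n * pochN q ((q : ℂ) ^ 2 * γ / (a * s * x)) n * pochN q ((q : ℂ) * γ ^ 2) n) *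
        ((q : ℂ) / (b * x)) ^ n

/-- Casorati determinant at `x = z q^{-k}` for index-form functions. -/
def casDIdx (q : ℝ) (a b c d : ℂ) (f g : ℤ → ℂ) (z : ℝ) (k : ℤ) : ℂ :=
  (f k * g (k - 1) - f (k - 1) * g k) * u q a b c d (z * q ^ (-k)) /
    ((1 - (q : ℂ)) * ((z * q ^ (-k) : ℝ) : ℂ))

/-- The c-function `c_z(γ)`. -/
def cz (q : ℝ) (a b c d : ℂ) (z : ℝ) (γ : ℂ) : ℂ :=
  let s : ℂ := sP q a b c d
  poch q (s / γ) * poch q (c * q / (a * s * γ)) * poch q (d * q / (a * s * γ)) *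
      theta q (b * s * z * γ) /
    (poch q (c * q / a) * poch q (d * q / a) * poch q (1 / γ ^ 2) * theta q (b * z))

/-- The expansion coefficient `d_z(γ)`. -/
def dz (q : ℝ) (a b c d : ℂ) (z : ℝ) (γ : ℂ) : ℂ :=
  let s : ℂ := sP q a b c d
  (poch q (c * q / a) * poch q (d * q / a) * theta q (b * z) /
      (theta q (a / b) * theta q (c * z) * theta q (d * z))) *
    (poch q (c * q * γ / (s * b)) * poch q (d * q * γ / (s * b)) *
        theta q (a * s * z / (q * γ)) /
      (poch q (q * γ ^ 2) * poch q (s / γ)))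

/-- The Casorati determinant `v(γ) = D(Φ_γ^+, Φ_γ^-)`. -/
def vFun (q zm zp : ℝ) (a b c d : ℂ) (γ : ℂ) : ℂ :=
  let s : ℂ := sP q a b c d;
  -((zp : ℂ) * (1 - (q : ℂ)) * theta q ((zm : ℂ) / zp) /
      (theta q (c * zm) * theta q (d * zm) * theta q (c * zp) * theta q (d * zp))) *
    (poch q (c * q * γ / (a * s)) * poch q (d * q * γ / (a * s)) * poch q (c * q * γ / (b * s)) *
        poch q (d * q * γ / (b * s)) * poch q (s * γ) * poch q (q * γ / s) *
        theta q (a * b * s * zm * zp / (q * γ)) /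
      (γ * (poch q (q * γ ^ 2)) ^ 2))

/-- The function `v₁(γ)` in the continuous part of the spectral measure. -/
def v1Fun (q zm zp : ℝ) (a b c d : ℂ) (γ : ℂ) : ℂ :=
  let s : ℂ := sP q a b c d
  ((poch q (c * q / a)) ^ 2 * (poch q (d * q / a)) ^ 2 * theta q (b * zp) * theta q (b * zm) /
      ((1 - (q : ℂ)) * a * b * (zm : ℂ) ^ 2 * (zp : ℂ) ^ 2 *
        (theta q ((zm : ℂ) / zp) * theta q ((zp : ℂ) / zm) * theta q (a / b) * theta q (b / a)))) *
    (poch q (γ ^ 2) * poch q (γ⁻¹ ^ 2) /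
      (poch q (s * γ) * poch q (s / γ) * poch q (c * q * γ / (a * s)) *
        poch q (c * q / (a * s * γ)) * poch q (d * q * γ / (a * s)) *
        poch q (d * q / (a * s * γ)) *
        (theta q (s * γ) * theta q (s / γ) * theta q (a * b * s * zm * zp * γ) *
          theta q (a * b * s * zm * zp / γ)))) *
    ((zm : ℂ) * (theta q (a * zp) * theta q (c * zp) * theta q (d * zp) * theta q (b * zm) *
          theta q (a * s * zm * γ) * theta q (a * s * zm / γ)) -
      (zp : ℂ) * (theta q (a * zm) * theta q (c * zm) * theta q (d * zm) * theta q (b * zp) *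
          theta q (a * s * zp * γ) * theta q (a * s * zp / γ)))

/-- The function `v₂(γ)` in the continuous part of the spectral measure. -/
def v2Fun (q zm zp : ℝ) (a b c d : ℂ) (γ : ℂ) : ℂ :=
  let s : ℂ := sP q a b c d
  (poch q (c * q / a) * poch q (d * q / a) * poch q (c * q / b) * poch q (d * q / b) *
      (theta q (a * zp) * theta q (a * zm) * theta q (b * zp) * theta q (b * zm) *
        theta q (c * d * zm * zp)) /
      (a * b * (zm : ℂ) ^ 2 * (zp : ℂ) * (1 - (q : ℂ)) *
        (theta q ((zp : ℂ) / zm) * theta q (a / b) * theta q (b / a)))) *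
    (poch q (γ ^ 2) * poch q (γ⁻¹ ^ 2) /
      (poch q (s * γ) * poch q (s / γ) *
        (theta q (s * γ) * theta q (s / γ) * theta q (a * b * s * zm * zp * γ) *
          theta q (a * b * s * zm * zp / γ))))

/-- The function `u₁(γ)`. -/
def u1Fun (q zm zp : ℝ) (a b c d : ℂ) (γ : ℂ) : ℂ :=
  Kz q a b c d zp * cz q a b c d zp γ * cz q a b c d zp γ⁻¹ -
    Kz q a b c d zm * cz q a b c d zm γ * cz q a b c d zm γ⁻¹

/-- The function `u₂(γ)`. -/
def u2Fun (q zm zp : ℝ) (a b c d : ℂ) (γ : ℂ) : ℂ :=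
  Kz q a b c d zp * cz q a b c d zp γ * cz q b a c d zp γ⁻¹ -
    Kz q a b c d zm * cz q a b c d zm γ * cz q b a c d zm γ⁻¹

/-- The big q-Jacobi polynomial `P_k(y; α, β, δ; q)`. -/
def bigqJacobiP (q : ℝ) (α β δ : ℂ) (k : ℕ) (y : ℂ) : ℂ :=
  ∑ j ∈ Finset.range (k + 1),
    pochN q (((q : ℂ) ^ k)⁻¹) j * pochN q (α * β * (q : ℂ) ^ (k + 1)) j * pochN q y j /
      (pochN q q j * pochN q (α * q) j * pochN q (δ * q) j) * (q : ℂ) ^ j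


section Statement18Aux

open Filter Finset

variable {q zm zp : ℝ} {a b c d : ℂ}

lemma normQ (hq0 : 0 < q) (hq1 : q < 1) : ‖(q:ℂ)‖ < 1 := by
  rw [Complex.norm_real, Real.norm_eq_abs, abs_of_pos hq0]; exact hq1

lemma summable_clog {Q : ℂ} (hQ : ‖Q‖ < 1) (y : ℂ) :
    Summable fun j : ℕ => Complex.log (1 - y * Q ^ j) :=
  ((summable_geometric_of_norm_lt_one hQ).mul_left y).clog_one_sub

lemma multipliable_poch {Q : ℂ} (hQ : ‖Q‖ < 1) {y : ℂ} (hy : ∀ j : ℕ, 1 - y * Q ^ j ≠ 0) :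
    Multipliable fun j : ℕ => 1 - y * Q ^ j :=
  Complex.multipliable_of_summable_log (summable_clog hQ y)

lemma poch_ne_zero {Q : ℂ} (hQ : ‖Q‖ < 1) {y : ℂ} (hy : ∀ j : ℕ, 1 - y * Q ^ j ≠ 0) :
    poch Q y ≠ 0 := by
  have h := Complex.cexp_tsum_eq_tprod (f := fun n : ℕ => 1 - y * Q ^ n) hy (summable_clog hQ y)
  rw [poch, ← h]
  exact Complex.exp_ne_zero _

lemma poch_split {Q : ℂ} (hQ : ‖Q‖ < 1) {y : ℂ} (hy : ∀ j : ℕ, 1 - y * Q ^ j ≠ 0) (k : ℕ) :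
    poch Q y = pochN Q y k * poch Q (y * Q ^ k) := by
  have hm : Multipliable fun n : ℕ => 1 - y * Q ^ (n + k) := by
    refine (multipliable_poch hQ (y := y * Q ^ k) ?_).congr (fun n => by rw [pow_add]; ring)
    intro j; have := hy (k + j); rwa [pow_add, ← mul_assoc] at this
  have h := Multipliable.prod_mul_tprod_nat_mul' (f := fun j : ℕ => 1 - y * Q ^ j) (k := k) hm
  rw [poch, pochN, ← h, poch]
  congr 1
  exact tprod_congr fun i => by
    show 1 - y * Q ^ (i + k) = 1 - y * Q ^ k * Q ^ i
    rw [pow_add]; ring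

lemma pochN_ne_zero {Q : ℂ} {y : ℂ} (hy : ∀ j : ℕ, 1 - y * Q ^ j ≠ 0) (k : ℕ) :
    pochN Q y k ≠ 0 := Finset.prod_ne_zero_iff.2 fun j _ => hy j

lemma tendsto_poch_one {Q : ℂ} (hQ : ‖Q‖ < 1) {y : ℂ} (hy : ∀ j : ℕ, 1 - y * Q ^ j ≠ 0) :
    Tendsto (fun k : ℕ => poch Q (y * Q ^ k)) atTop (nhds 1) := by
  have hp := poch_ne_zero hQ hy
  have heq : ∀ k : ℕ, poch Q (y * Q ^ k) = poch Q y / pochN Q y k := fun k => by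
    rw [poch_split hQ hy k]; field_simp [pochN_ne_zero hy k]
  rw [tendsto_congr heq]
  have ht : Tendsto (fun k : ℕ => pochN Q y k) atTop (nhds (poch Q y)) :=
    (multipliable_poch hQ hy).hasProd.tendsto_prod_nat
  have := Tendsto.div (tendsto_const_nhds (x := poch Q y)) ht hp
  simpa [div_self hp, Pi.div_def] using this

lemma poch_rec {Q : ℂ} (hQ : ‖Q‖ < 1) {y : ℂ} (hy : ∀ j : ℕ, 1 - y * Q ^ j ≠ 0) :
    poch Q y = (1 - y) * poch Q (y * Q) := by
  have := poch_split hQ hy 1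
  rwa [pochN, Finset.prod_range_one, pow_zero, mul_one, pow_one] at this

lemma factor_ne (hq0 : 0 < q) {z : ℝ} (hz : z ≠ 0) {α : ℂ}
    (hα : ∀ k : ℤ, α ≠ ((z:ℂ))⁻¹ * (q:ℂ) ^ k) (j : ℤ) :
    1 - α * ((z:ℂ) * (q:ℂ) ^ j) ≠ 0 := by
  have hzC : (z:ℂ) ≠ 0 := Complex.ofReal_ne_zero.2 hz
  have hqC : (q:ℂ) ≠ 0 := Complex.ofReal_ne_zero.2 hq0.ne'
  intro h
  apply hα (-j)
  have h1 : (1:ℂ) = α * ((z:ℂ) * (q:ℂ) ^ j) := sub_eq_zero.mp h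
  have hqj : ((q:ℂ)) ^ j ≠ 0 := zpow_ne_zero _ hqC
  rw [zpow_neg]
  field_simp
  linear_combination -h

lemma factor_ne' (hq0 : 0 < q) {z : ℝ} (hz : z ≠ 0) {α : ℂ}
    (hα : ∀ k : ℤ, α ≠ ((z:ℂ))⁻¹ * (q:ℂ) ^ k) (j : ℤ) (i : ℕ) :
    1 - (α * ((z:ℂ) * (q:ℂ) ^ j)) * (q:ℂ) ^ i ≠ 0 := by
  have hqC : (q:ℂ) ≠ 0 := Complex.ofReal_ne_zero.2 hq0.ne'
  have h := factor_ne hq0 hz hα (j + i)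
  rw [zpow_add₀ hqC, zpow_natCast] at h
  intro hcon; apply h; linear_combination hcon

lemma casD_eq_Dq (q : ℝ) (a b c d : ℂ) (φ ψ : ℝ → ℂ) (x : ℝ)
    (hx : (x:ℂ) ≠ 0) (hq : (1:ℂ) - (q:ℂ) ≠ 0) :
    casD q a b c d φ ψ x = (1 - (q:ℂ))^2 * ((x:ℂ)^2 * Bcoef q a b c d x) * w q a b c d x *
      (Dq q φ x * ψ (q*x) - φ (q*x) * Dq q ψ x) := by
  rw [casD, u, Dq, Dq]
  field_simp
  ring

lemma casD_eq (q : ℝ) (a b c d : ℂ) (φ ψ : ℝ → ℂ) (x : ℝ)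
    (hx : (x:ℂ) ≠ 0) (hq : (1:ℂ) - (q:ℂ) ≠ 0) :
    casD q a b c d φ ψ x = (1 - (q:ℂ)) * (x:ℂ) * Bcoef q a b c d x * w q a b c d x *
      (φ x * ψ (q*x) - φ (q*x) * ψ x) := by
  rw [casD, u]
  field_simp

lemma sP_sq (hq0 : 0 < q) (ha : a ≠ 0) (hb : b ≠ 0) (hc : c ≠ 0) (hd : d ≠ 0) :
    sP q a b c d * sP q a b c d = c * d * (q:ℂ) / (a * b) := by
  have hqC : (q:ℂ) ≠ 0 := Complex.ofReal_ne_zero.2 hq0.ne'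
  have hbase : c * d * (q:ℂ) / (a * b) ≠ 0 := by
    apply div_ne_zero (by simp [hc, hd, hqC]) (by simp [ha, hb])
  rw [sP, ← Complex.cpow_add _ _ hbase]
  norm_num

lemma sP_ne_zero (hq0 : 0 < q) (ha : a ≠ 0) (hb : b ≠ 0) (hc : c ≠ 0) (hd : d ≠ 0) :
    sP q a b c d ≠ 0 := by
  intro h
  have h2 := sP_sq hq0 ha hb hc hd
  rw [h, mul_zero] at h2
  have hqC : (q:ℂ) ≠ 0 := Complex.ofReal_ne_zero.2 hq0.ne'
  exact (div_ne_zero (by simp [hc, hd, hqC]) (by simp [ha, hb])) h2.symm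

lemma frac_helper (s A B N u v D : ℂ) (hu : u ≠ 0) (hv : v ≠ 0) (hD : D ≠ 0) :
    s * (A / u) * (B / v) * (N / D) = s * A * B * N / (u * v * D) := by
  field_simp

lemma key_scalar (a b c d X s Pa Pb Pc Pd q : ℂ) (hq : q ≠ 0)
    (ha : a ≠ 0) (hb : b ≠ 0) (hc : c ≠ 0) (hd : d ≠ 0) (hX : X ≠ 0)
    (hPc : Pc ≠ 0) (hPd : Pd ≠ 0)
    (hcq : q - c * X ≠ 0) (hdq : q - d * X ≠ 0) :
    q * (s * (a * b) / (c * d * q) * (1 - q / (a * X)) * (1 - q / (b * X))) * (Pa * Pb / (Pc * Pd)) =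
      s * (1 - 1 / (c * (X * q⁻¹))) * (1 - 1 / (d * (X * q⁻¹))) *
        ((1 - a * (X * q⁻¹)) * Pa * ((1 - b * (X * q⁻¹)) * Pb) /
          ((1 - c * (X * q⁻¹)) * Pc * ((1 - d * (X * q⁻¹)) * Pd))) := by
  have e1 : ∀ α : ℂ, α ≠ 0 → 1 - q / (α * X) = (α * X - q) / (α * X) := fun α hα => by
    field_simp
  have e2 : ∀ α : ℂ, 1 - α * (X * q⁻¹) = (q - α * X) / q := fun α => by field_simp
  have e3 : ∀ α : ℂ, α ≠ 0 → 1 - 1 / (α * (X * q⁻¹)) = (α * X - q) / (α * X) := fun α hα => by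
    rw [one_div, mul_inv, mul_inv, inv_inv]
    field_simp
  rw [e1 a ha, e1 b hb, e3 c hc, e3 d hd, e2 a, e2 b, e2 c, e2 d]
  have hD1 : (q - c * X) / q * Pc * ((q - d * X) / q * Pd) ≠ 0 :=
    mul_ne_zero (mul_ne_zero (div_ne_zero hcq hq) hPc) (mul_ne_zero (div_ne_zero hdq hq) hPd)
  have hD2 : (q - c * X) * Pc * ((q - d * X) * Pd) ≠ 0 :=
    mul_ne_zero (mul_ne_zero hcq hPc) (mul_ne_zero hdq hPd)
  have hinner : (q - a * X) / q * Pa * ((q - b * X) / q * Pb) /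
      ((q - c * X) / q * Pc * ((q - d * X) / q * Pd))
      = ((q - a * X) * Pa * ((q - b * X) * Pb)) / ((q - c * X) * Pc * ((q - d * X) * Pd)) := by
    rw [div_eq_div_iff hD1 hD2]; ring
  rw [hinner]
  have hL : q * (s * (a * b) / (c * d * q) * ((a * X - q) / (a * X)) * ((b * X - q) / (b * X))) *
      (Pa * Pb / (Pc * Pd))
      = (q * (s * (a * b)) * (a * X - q) * (b * X - q) * (Pa * Pb)) /
        ((c * d * q) * (a * X) * (b * X) * (Pc * Pd)) := by
    ring
  have hR : s * ((c * X - q) / (c * X)) * ((d * X - q) / (d * X)) *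
      (((q - a * X) * Pa * ((q - b * X) * Pb)) / ((q - c * X) * Pc * ((q - d * X) * Pd)))
      = (s * (c * X - q) * (d * X - q) * ((q - a * X) * Pa * ((q - b * X) * Pb))) /
        ((c * X) * (d * X) * ((q - c * X) * Pc * ((q - d * X) * Pd))) :=
    frac_helper _ _ _ _ _ _ _ (mul_ne_zero hc hX) (mul_ne_zero hd hX) hD2
  rw [hL, hR, div_eq_div_iff
    (by exact mul_ne_zero (mul_ne_zero (mul_ne_zero (by simp [hc, hd, hq])
      (mul_ne_zero ha hX)) (mul_ne_zero hb hX)) (mul_ne_zero hPc hPd))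
    (by exact mul_ne_zero (mul_ne_zero (mul_ne_zero hc hX) (mul_ne_zero hd hX)) hD2)]
  ring

set_option maxHeartbeats 1000000 in
lemma key_identity (hq0 : 0 < q) (hq1 : q < 1)
    (ha : a ≠ 0) (hb : b ≠ 0) (hc : c ≠ 0) (hd : d ≠ 0)
    {z : ℝ} (hz : z ≠ 0)
    (hfa : ∀ k : ℤ, a ≠ ((z:ℂ))⁻¹ * (q:ℂ) ^ k) (hfb : ∀ k : ℤ, b ≠ ((z:ℂ))⁻¹ * (q:ℂ) ^ k)
    (hfc : ∀ k : ℤ, c ≠ ((z:ℂ))⁻¹ * (q:ℂ) ^ k) (hfd : ∀ k : ℤ, d ≠ ((z:ℂ))⁻¹ * (q:ℂ) ^ k)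
    (j : ℤ) :
    (q:ℂ) * Acoef q a b c d (z * q ^ j) * w q a b c d (z * q ^ j)
      = Bcoef q a b c d (z * q ^ (j-1)) * w q a b c d (z * q ^ (j-1)) := by
  have hQ := normQ hq0 hq1
  have hqC : (q:ℂ) ≠ 0 := Complex.ofReal_ne_zero.2 hq0.ne'
  have hzC : (z:ℂ) ≠ 0 := Complex.ofReal_ne_zero.2 hz
  have hXne : ((z:ℂ) * (q:ℂ) ^ j) ≠ 0 := mul_ne_zero hzC (zpow_ne_zero _ hqC)
  have hqj : ((q:ℂ)) ^ j ≠ 0 := zpow_ne_zero _ hqC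
  have castj : ((z * q ^ j : ℝ) : ℂ) = (z:ℂ) * (q:ℂ) ^ j := by push_cast; ring
  have castj1 : ((z * q ^ (j-1) : ℝ) : ℂ) = (z:ℂ) * (q:ℂ) ^ (j-1) := by push_cast; ring
  have hrec : ∀ α : ℂ, (∀ k : ℤ, α ≠ ((z:ℂ))⁻¹ * (q:ℂ) ^ k) →
      poch q (α * ((z:ℂ) * (q:ℂ) ^ (j-1)))
        = (1 - α * ((z:ℂ) * (q:ℂ) ^ (j-1))) * poch q (α * ((z:ℂ) * (q:ℂ) ^ j)) := by
    intro α hα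
    have h := poch_rec hQ (y := α * ((z:ℂ) * (q:ℂ) ^ (j-1))) (factor_ne' hq0 hz hα (j-1))
    rw [h]
    congr 2
    rw [show (q:ℂ) ^ (j-1) = (q:ℂ) ^ j * ((q:ℂ))⁻¹ from zpow_sub_one₀ hqC j]
    field_simp
  have hY : (z:ℂ) * (q:ℂ) ^ (j-1) = ((z:ℂ) * (q:ℂ) ^ j) * ((q:ℂ))⁻¹ := by
    rw [zpow_sub_one₀ hqC]; ring
  have hPc : poch q (c * ((z:ℂ) * (q:ℂ) ^ j)) ≠ 0 :=
    poch_ne_zero hQ (factor_ne' hq0 hz hfc j)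
  have hPd : poch q (d * ((z:ℂ) * (q:ℂ) ^ j)) ≠ 0 :=
    poch_ne_zero hQ (factor_ne' hq0 hz hfd j)
  have hcY : 1 - c * (((z:ℂ) * (q:ℂ) ^ j) * ((q:ℂ))⁻¹) ≠ 0 := by
    rw [← hY]; exact factor_ne hq0 hz hfc (j-1)
  have hdY : 1 - d * (((z:ℂ) * (q:ℂ) ^ j) * ((q:ℂ))⁻¹) ≠ 0 := by
    rw [← hY]; exact factor_ne hq0 hz hfd (j-1)
  have hs := sP_sq hq0 ha hb hc hd
  have hsne := sP_ne_zero hq0 ha hb hc hd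
  have hs' : sP q a b c d * sP q a b c d * (a * b) = c * d * (q:ℂ) := by
    rw [hs]; field_simp
  have hss : (sP q a b c d)⁻¹ = sP q a b c d * (a * b) / (c * d * (q:ℂ)) := by
    rw [eq_div_iff (by simp [hc, hd, hqC] : c * d * (q:ℂ) ≠ 0)]
    field_simp
    linear_combination -hs'
  have hcq : (q:ℂ) - c * ((z:ℂ) * (q:ℂ) ^ j) ≠ 0 := by
    have h := factor_ne hq0 hz hfc (j-1)
    rw [hY] at h
    intro hcon; apply h
    field_simp
    linear_combination hcon
  have hdq : (q:ℂ) - d * ((z:ℂ) * (q:ℂ) ^ j) ≠ 0 := by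
    have h := factor_ne hq0 hz hfd (j-1)
    rw [hY] at h
    intro hcon; apply h
    field_simp
    linear_combination hcon
  rw [Acoef, Bcoef, w, w, castj, castj1, hrec a hfa, hrec b hfb, hrec c hfc, hrec d hfd, hY,
    hss]
  exact key_scalar a b c d _ _ _ _ _ _ _ hqC ha hb hc hd hXne hPc hPd hcq hdq

lemma green_step (hq0 : 0 < q) (hq1 : q < 1)
    (ha : a ≠ 0) (hb : b ≠ 0) (hc : c ≠ 0) (hd : d ≠ 0)
    {z : ℝ} (hz : z ≠ 0)
    (hfa : ∀ k : ℤ, a ≠ ((z:ℂ))⁻¹ * (q:ℂ) ^ k) (hfb : ∀ k : ℤ, b ≠ ((z:ℂ))⁻¹ * (q:ℂ) ^ k)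
    (hfc : ∀ k : ℤ, c ≠ ((z:ℂ))⁻¹ * (q:ℂ) ^ k) (hfd : ∀ k : ℤ, d ≠ ((z:ℂ))⁻¹ * (q:ℂ) ^ k)
    {φ ψ : ℝ → ℂ} {μ1 μ2 : ℂ} (j : ℤ)
    (hLφ : Lop q a b c d φ (z * q ^ j) = μ1 * φ (z * q ^ j))
    (hLψ : Lop q a b c d ψ (z * q ^ j) = μ2 * ψ (z * q ^ j)) :
    (μ1 - μ2) * (φ (z * q ^ j) * ψ (z * q ^ j) * w q a b c d (z * q ^ j) *
        ((1 - (q:ℂ)) * ((z * q ^ j : ℝ) : ℂ)))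
      = casD q a b c d φ ψ (z * q ^ (j-1)) - casD q a b c d φ ψ (z * q ^ j) := by
  have hqR : q ≠ 0 := hq0.ne'
  have hqC : (q:ℂ) ≠ 0 := Complex.ofReal_ne_zero.2 hqR
  have hzC : (z:ℂ) ≠ 0 := Complex.ofReal_ne_zero.2 hz
  have h1q : (1:ℂ) - (q:ℂ) ≠ 0 := by
    intro h
    have : (q:ℂ) = 1 := by linear_combination -h
    have : q = 1 := by exact_mod_cast this
    linarith
  have he1 : q * (z * q ^ (j-1)) = z * q ^ j := by
    rw [zpow_sub_one₀ hqR]; field_simp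
  have he2 : q * (z * q ^ j) = z * q ^ (j+1) := by
    rw [zpow_add_one₀ hqR]; ring
  have he3 : (z * q ^ j) / q = z * q ^ (j-1) := by
    rw [zpow_sub_one₀ hqR]; field_simp
  have hx0 : ((z * q ^ j : ℝ) : ℂ) ≠ 0 := by
    push_cast
    exact mul_ne_zero hzC (zpow_ne_zero _ hqC)
  have hx1 : ((z * q ^ (j-1) : ℝ) : ℂ) ≠ 0 := by
    push_cast
    exact mul_ne_zero hzC (zpow_ne_zero _ hqC)
  rw [Lop, he2, he3] at hLφ hLψ
  rw [casD_eq q a b c d φ ψ _ hx1 h1q, casD_eq q a b c d φ ψ _ hx0 h1q, he1, he2]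
  have hkey := key_identity hq0 hq1 ha hb hc hd hz hfa hfb hfc hfd j
  have hcx : ((z * q ^ j : ℝ) : ℂ) = (q:ℂ) * ((z * q ^ (j-1) : ℝ) : ℂ) := by
    push_cast
    rw [zpow_sub_one₀ hqC]
    field_simp
  rw [hcx]
  linear_combination
    (-(1 - (q:ℂ)) * (q:ℂ) * ((z * q ^ (j-1) : ℝ) : ℂ) * w q a b c d (z * q ^ j) *
        ψ (z * q ^ j)) * hLφ +
      ((1 - (q:ℂ)) * (q:ℂ) * ((z * q ^ (j-1) : ℝ) : ℂ) * w q a b c d (z * q ^ j) *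
        φ (z * q ^ j)) * hLψ +
      ((1 - (q:ℂ)) * ((z * q ^ (j-1) : ℝ) : ℂ) *
        (φ (z * q ^ (j-1)) * ψ (z * q ^ j) - φ (z * q ^ j) * ψ (z * q ^ (j-1)))) * hkey

lemma sum_telescope_Icc (g : ℤ → ℂ) (n : ℤ) : ∀ m, n - 1 ≤ m →
    ∑ j ∈ Finset.Icc n m, (g (j-1) - g j) = g (n-1) - g m := by
  refine Int.le_induction ?_ ?_
  · rw [Finset.Icc_eq_empty (by omega)]; simp
  · intro m hm ih
    have hins : Finset.Icc n (m+1) = insert (m+1) (Finset.Icc n m) := by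
      ext x; simp; omega
    rw [hins, Finset.sum_insert (by simp), ih]; ring

lemma tendsto_int_of_nat {f : ℤ → ℂ} {L : ℂ}
    (h : Tendsto (fun j : ℕ => f (j : ℤ)) atTop (nhds L)) :
    Tendsto f atTop (nhds L) := by
  have htoNat : Tendsto Int.toNat atTop atTop :=
    tendsto_atTop_atTop.2 (fun b => ⟨(b:ℤ), fun a ha => by omega⟩)
  refine (h.comp htoNat).congr' ?_
  filter_upwards [eventually_ge_atTop (0:ℤ)] with j hj
  show f ((j.toNat : ℕ) : ℤ) = f j
  rw [Int.toNat_of_nonneg hj]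

lemma tendsto_casD (hq0 : 0 < q) (hq1 : q < 1)
    (ha : a ≠ 0) (hb : b ≠ 0) (hc : c ≠ 0) (hd : d ≠ 0)
    {z : ℝ} (hz : z ≠ 0)
    (hfa : ∀ k : ℤ, a ≠ ((z:ℂ))⁻¹ * (q:ℂ) ^ k) (hfb : ∀ k : ℤ, b ≠ ((z:ℂ))⁻¹ * (q:ℂ) ^ k)
    (hfc : ∀ k : ℤ, c ≠ ((z:ℂ))⁻¹ * (q:ℂ) ^ k) (hfd : ∀ k : ℤ, d ≠ ((z:ℂ))⁻¹ * (q:ℂ) ^ k)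
    {φ ψ : ℝ → ℂ} {vφ vψ vφ' vψ' : ℂ}
    (hφ0 : Tendsto (fun k : ℕ => φ (z * q ^ k)) atTop (nhds vφ))
    (hψ0 : Tendsto (fun k : ℕ => ψ (z * q ^ k)) atTop (nhds vψ))
    (hφ1 : Tendsto (fun k : ℕ => Dq q φ (z * q ^ k)) atTop (nhds vφ'))
    (hψ1 : Tendsto (fun k : ℕ => Dq q ψ (z * q ^ k)) atTop (nhds vψ')) :
    Tendsto (fun j : ℤ => casD q a b c d φ ψ (z * q ^ j)) atTop
      (nhds ((1 - (q:ℂ))^2 * (sP q a b c d / (c * d)) * 1 * (vφ' * vψ - vφ * vψ'))) := by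
  have hQ := normQ hq0 hq1
  have hqC : (q:ℂ) ≠ 0 := Complex.ofReal_ne_zero.2 hq0.ne'
  have hzC : (z:ℂ) ≠ 0 := Complex.ofReal_ne_zero.2 hz
  have h1q : (1:ℂ) - (q:ℂ) ≠ 0 := by
    intro h
    have : (q:ℂ) = 1 := by linear_combination -h
    have : q = 1 := by exact_mod_cast this
    linarith
  apply tendsto_int_of_nat
  have hpow : ∀ j : ℕ, z * q ^ (j : ℤ) = z * q ^ j := fun j => by rw [zpow_natCast]
  have hxne : ∀ j : ℕ, ((z * q ^ j : ℝ) : ℂ) ≠ 0 := fun j => by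
    push_cast
    exact mul_ne_zero hzC (pow_ne_zero _ hqC)
  have hrw : ∀ j : ℕ, casD q a b c d φ ψ (z * q ^ (j : ℤ)) =
      (1 - (q:ℂ))^2 * (((z * q ^ j : ℝ) : ℂ)^2 * Bcoef q a b c d (z * q ^ j)) *
        w q a b c d (z * q ^ j) *
        (Dq q φ (z * q ^ j) * ψ (z * q ^ (j+1)) - φ (z * q ^ (j+1)) * Dq q ψ (z * q ^ j)) := by
    intro j
    rw [hpow j, casD_eq_Dq q a b c d φ ψ _ (hxne j) h1q,
      show q * (z * q ^ j) = z * q ^ (j+1) by rw [pow_succ]; ring]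
  rw [tendsto_congr hrw]
  -- limit of x_j = ((z q^j : ℝ) : ℂ)
  have hx0 : Tendsto (fun j : ℕ => ((z * q ^ j : ℝ) : ℂ)) atTop (nhds 0) := by
    have hr : Tendsto (fun j : ℕ => z * q ^ j) atTop (nhds 0) := by
      simpa using (tendsto_pow_atTop_nhds_zero_of_lt_one hq0.le hq1).const_mul z
    have h2 := (Complex.continuous_ofReal.tendsto (0:ℝ)).comp hr
    rw [Complex.ofReal_zero] at h2
    exact h2
  -- F1
  have hB : Tendsto (fun j : ℕ => ((z * q ^ j : ℝ) : ℂ)^2 * Bcoef q a b c d (z * q ^ j))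
      atTop (nhds (sP q a b c d / (c * d))) := by
    have heq : ∀ j : ℕ, ((z * q ^ j : ℝ) : ℂ)^2 * Bcoef q a b c d (z * q ^ j)
        = sP q a b c d * (((z * q ^ j : ℝ) : ℂ) - 1/c) * (((z * q ^ j : ℝ) : ℂ) - 1/d) := by
      intro j
      have hXj : ((z * q ^ j : ℝ) : ℂ) ≠ 0 := hxne j
      rw [Bcoef]
      revert hXj
      generalize ((z * q ^ j : ℝ) : ℂ) = X
      intro hXj
      field_simp
    rw [tendsto_congr heq]
    have h := ((tendsto_const_nhds (x := sP q a b c d)).mul (hx0.sub_const (1/c))).mul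
      (hx0.sub_const (1/d))
    convert h using 1
    rw [zero_sub, zero_sub]
    field_simp
  -- F2
  have hpochα : ∀ α : ℂ, (∀ k : ℤ, α ≠ ((z:ℂ))⁻¹ * (q:ℂ) ^ k) →
      Tendsto (fun j : ℕ => poch q (α * ((z * q ^ j : ℝ) : ℂ))) atTop (nhds 1) := by
    intro α hα
    have hy : ∀ i : ℕ, 1 - (α * (z:ℂ)) * (q:ℂ) ^ i ≠ 0 := by
      intro i
      have := factor_ne hq0 hz hα (i : ℤ)
      rw [zpow_natCast] at this
      intro hcon; apply this; linear_combination hcon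
    have h := tendsto_poch_one hQ hy
    refine h.congr fun j => ?_
    congr 1
    push_cast
    ring
  have hw : Tendsto (fun j : ℕ => w q a b c d (z * q ^ j)) atTop (nhds 1) := by
    have h := ((hpochα a hfa).mul (hpochα b hfb)).div ((hpochα c hfc).mul (hpochα d hfd))
      (by norm_num)
    simp only [w]
    convert h using 2
    all_goals norm_num
  -- F3
  have hshift : Tendsto (fun j : ℕ => (j + 1 : ℕ)) atTop atTop := tendsto_add_atTop_nat 1
  have hψs : Tendsto (fun j : ℕ => ψ (z * q ^ (j+1))) atTop (nhds vψ) := hψ0.comp hshift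
  have hφs : Tendsto (fun j : ℕ => φ (z * q ^ (j+1))) atTop (nhds vφ) := hφ0.comp hshift
  have hbr : Tendsto (fun j : ℕ =>
      Dq q φ (z * q ^ j) * ψ (z * q ^ (j+1)) - φ (z * q ^ (j+1)) * Dq q ψ (z * q ^ j))
      atTop (nhds (vφ' * vψ - vφ * vψ')) := (hφ1.mul hψs).sub (hφs.mul hψ1)
  exact ((((tendsto_const_nhds (x := (1 - (q:ℂ))^2)).mul hB)).mul hw).mul hbr

end Statement18Aux

/-- Green's formula for the truncated inner product of two
eigenfunctions with distinct eigenvalues. -/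
theorem statement18 (q zm zp : ℝ) (a b c d : ℂ)
    (hq0 : 0 < q) (hq1 : q < 1) (hzm : zm < 0) (hzp : 0 < zp)
    (hP : memP q zm zp a b c d) (γ₁ γ₂ : ℂ) (hγ₁ : γ₁ ≠ 0) (hγ₂ : γ₂ ≠ 0)
    (hμ : γ₁ + γ₁⁻¹ ≠ γ₂ + γ₂⁻¹) (φ ψ : ℝ → ℂ)
    (hφ : memV q zm zp a b c d (γ₁ + γ₁⁻¹) φ)
    (hψ : memV q zm zp a b c d (γ₂ + γ₂⁻¹) ψ) (k n : ℤ) :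
    Tendsto
      (fun lm : ℤ × ℤ =>
        trunc q zm zp a b c d φ (fun x => (starRingEnd ℂ) (ψ x)) k lm.1 lm.2 n)
      atTop
      (nhds ((casD q a b c d φ ψ (zp * q ^ (n - 1)) -
          casD q a b c d φ ψ (zm * q ^ (k - 1))) /
        ((γ₁ + γ₁⁻¹) - (γ₂ + γ₂⁻¹)))) := by
  obtain ⟨ha, hb, hc, hd, -, hpts, -, -⟩ := hP
  have hfa_p : ∀ j : ℤ, a ≠ ((zp:ℂ))⁻¹ * (q:ℂ) ^ j := fun j => (hpts a (by simp) j).1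
  have hfb_p : ∀ j : ℤ, b ≠ ((zp:ℂ))⁻¹ * (q:ℂ) ^ j := fun j => (hpts b (by simp) j).1
  have hfc_p : ∀ j : ℤ, c ≠ ((zp:ℂ))⁻¹ * (q:ℂ) ^ j := fun j => (hpts c (by simp) j).1
  have hfd_p : ∀ j : ℤ, d ≠ ((zp:ℂ))⁻¹ * (q:ℂ) ^ j := fun j => (hpts d (by simp) j).1
  have hfa_m : ∀ j : ℤ, a ≠ ((zm:ℂ))⁻¹ * (q:ℂ) ^ j := fun j => (hpts a (by simp) j).2
  have hfb_m : ∀ j : ℤ, b ≠ ((zm:ℂ))⁻¹ * (q:ℂ) ^ j := fun j => (hpts b (by simp) j).2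
  have hfc_m : ∀ j : ℤ, c ≠ ((zm:ℂ))⁻¹ * (q:ℂ) ^ j := fun j => (hpts c (by simp) j).2
  have hfd_m : ∀ j : ℤ, d ≠ ((zm:ℂ))⁻¹ * (q:ℂ) ^ j := fun j => (hpts d (by simp) j).2
  have hzpne : zp ≠ 0 := hzp.ne'
  have hzmne : zm ≠ 0 := hzm.ne
  obtain ⟨hLφ, ⟨vφ, hφm, hφp⟩, ⟨vφ', hφm', hφp'⟩⟩ := hφ
  obtain ⟨hLψ, ⟨vψ, hψm, hψp⟩, ⟨vψ', hψm', hψp'⟩⟩ := hψ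
  set μ1 := γ₁ + γ₁⁻¹ with hμ1
  set μ2 := γ₂ + γ₂⁻¹ with hμ2
  have hS : μ1 - μ2 ≠ 0 := sub_ne_zero.2 hμ
  set L : ℂ := (1 - (q:ℂ))^2 * (sP q a b c d / (c * d)) * 1 * (vφ' * vψ - vφ * vψ') with hLdef
  have hDp : Tendsto (fun j : ℤ => casD q a b c d φ ψ (zp * q ^ j)) atTop (nhds L) :=
    tendsto_casD hq0 hq1 ha hb hc hd hzpne hfa_p hfb_p hfc_p hfd_p hφp hψp hφp' hψp'
  have hDm : Tendsto (fun j : ℤ => casD q a b c d φ ψ (zm * q ^ j)) atTop (nhds L) :=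
    tendsto_casD hq0 hq1 ha hb hc hd hzmne hfa_m hfb_m hfc_m hfd_m hφm hψm hφm' hψm'
  have hstep : ∀ l m : ℤ, k - 1 ≤ l → n - 1 ≤ m →
      trunc q zm zp a b c d φ (fun x => (starRingEnd ℂ) (ψ x)) k l m n =
        ((casD q a b c d φ ψ (zp * q ^ (n-1)) - casD q a b c d φ ψ (zp * q ^ m)) -
         (casD q a b c d φ ψ (zm * q ^ (k-1)) - casD q a b c d φ ψ (zm * q ^ l))) /
          (μ1 - μ2) := by
    intro l m hl hm
    rw [eq_div_iff hS]
    have ep : ∀ j : ℤ, (μ1 - μ2) * ((1 - (q:ℂ)) * (φ (zp * q ^ j) *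
        (starRingEnd ℂ) ((starRingEnd ℂ) (ψ (zp * q ^ j))) * w q a b c d (zp * q ^ j) *
        ((zp * q ^ j : ℝ) : ℂ)))
        = casD q a b c d φ ψ (zp * q ^ (j-1)) - casD q a b c d φ ψ (zp * q ^ j) := by
      intro j
      have hg := green_step hq0 hq1 ha hb hc hd hzpne hfa_p hfb_p hfc_p hfd_p j
        (hLφ _ ⟨j, Or.inr rfl⟩) (hLψ _ ⟨j, Or.inr rfl⟩)
      rw [Complex.conj_conj]
      linear_combination hg
    have em : ∀ j : ℤ, (μ1 - μ2) * ((1 - (q:ℂ)) * (φ (zm * q ^ j) *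
        (starRingEnd ℂ) ((starRingEnd ℂ) (ψ (zm * q ^ j))) * w q a b c d (zm * q ^ j) *
        ((zm * q ^ j : ℝ) : ℂ)))
        = casD q a b c d φ ψ (zm * q ^ (j-1)) - casD q a b c d φ ψ (zm * q ^ j) := by
      intro j
      have hg := green_step hq0 hq1 ha hb hc hd hzmne hfa_m hfb_m hfc_m hfd_m j
        (hLφ _ ⟨j, Or.inl rfl⟩) (hLψ _ ⟨j, Or.inl rfl⟩)
      rw [Complex.conj_conj]
      linear_combination hg
    have hsum1 : ∑ j ∈ Finset.Icc n m, ((μ1 - μ2) * ((1 - (q:ℂ)) * (φ (zp * q ^ j) *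
        (starRingEnd ℂ) ((starRingEnd ℂ) (ψ (zp * q ^ j))) * w q a b c d (zp * q ^ j) *
        ((zp * q ^ j : ℝ) : ℂ))))
        = casD q a b c d φ ψ (zp * q ^ (n-1)) - casD q a b c d φ ψ (zp * q ^ m) := by
      rw [Finset.sum_congr rfl (fun j _ => ep j)]
      exact sum_telescope_Icc (fun i => casD q a b c d φ ψ (zp * q ^ i)) n m hm
    have hsum2 : ∑ j ∈ Finset.Icc k l, ((μ1 - μ2) * ((1 - (q:ℂ)) * (φ (zm * q ^ j) *
        (starRingEnd ℂ) ((starRingEnd ℂ) (ψ (zm * q ^ j))) * w q a b c d (zm * q ^ j) *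
        ((zm * q ^ j : ℝ) : ℂ))))
        = casD q a b c d φ ψ (zm * q ^ (k-1)) - casD q a b c d φ ψ (zm * q ^ l) := by
      rw [Finset.sum_congr rfl (fun j _ => em j)]
      exact sum_telescope_Icc (fun i => casD q a b c d φ ψ (zm * q ^ i)) k l hl
    rw [← hsum1, ← hsum2]
    simp only [trunc]
    simp only [← Finset.mul_sum]
    ring
  have h2 : Tendsto (fun lm : ℤ × ℤ => casD q a b c d φ ψ (zp * q ^ lm.2)) atTop (nhds L) := by
    rw [← prod_atTop_atTop_eq]
    exact hDp.comp tendsto_snd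
  have h1 : Tendsto (fun lm : ℤ × ℤ => casD q a b c d φ ψ (zm * q ^ lm.1)) atTop (nhds L) := by
    rw [← prod_atTop_atTop_eq]
    exact hDm.comp tendsto_fst
  have hG : Tendsto (fun lm : ℤ × ℤ =>
      ((casD q a b c d φ ψ (zp * q ^ (n-1)) - casD q a b c d φ ψ (zp * q ^ lm.2)) -
       (casD q a b c d φ ψ (zm * q ^ (k-1)) - casD q a b c d φ ψ (zm * q ^ lm.1))) /
        (μ1 - μ2)) atTop
      (nhds (((casD q a b c d φ ψ (zp * q ^ (n-1)) - L) -
        (casD q a b c d φ ψ (zm * q ^ (k-1)) - L)) / (μ1 - μ2))) :=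
    ((((tendsto_const_nhds).sub h2).sub ((tendsto_const_nhds).sub h1)).div_const (μ1 - μ2))
  have hval : ((casD q a b c d φ ψ (zp * q ^ (n-1)) - L) -
      (casD q a b c d φ ψ (zm * q ^ (k-1)) - L)) / (μ1 - μ2)
      = (casD q a b c d φ ψ (zp * q ^ (n-1)) - casD q a b c d φ ψ (zm * q ^ (k-1))) /
        (μ1 - μ2) := by
    ring
  rw [hval] at hG
  have hev : ∀ᶠ lm : ℤ × ℤ in atTop, k - 1 ≤ lm.1 ∧ n - 1 ≤ lm.2 := by
    filter_upwards [eventually_ge_atTop ((k-1, n-1) : ℤ × ℤ)] with lm h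
    exact ⟨h.1, h.2⟩
  refine Tendsto.congr' ?_ hG
  filter_upwards [hev] with lm hlm
  exact (hstep lm.1 lm.2 hlm.1 hlm.2).symm
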